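/- arXiv:2410.12370 — 2 statements merged into one kernel-verified Lean document; each statement's English description precedes it below -/
import Mathlib

section
/- Under the hypotheses of the previous statement, if additionally there is an observability constant C_obs such that |v|_X ≤ C_obs(|Lv|_H + δ₀) for all v ∈ A (where X is a normed space into which A embeds and δ₀ ≥ 0 reflects boundary data mismatch), and if |g* − g|_H ≤ δ, then with the choice γ = δ², the minimizer satisfies |u_γ − u*|_X ≤ C_obs ( δ₀ + δ √(1 + |u*|_A²) ) ≤ C_obs (δ₀ + (1 + |u*|_A) δ). -/
/-- convergence rate of the Tikhonov minimizer under an observability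
(conditional stability) estimate, with the choice `γ = δ²`. -/
theorem stmt8 {A H X : Type*} [NormedAddCommGroup A] [InnerProductSpace ℝ A] [CompleteSpace A]
    [NormedAddCommGroup H] [InnerProductSpace ℝ H] [CompleteSpace H]
    [NormedAddCommGroup X] [NormedSpace ℝ X]
    (L : A →L[ℝ] H) (ι : A →ₗ[ℝ] X) (Cobs δ₀ δ : ℝ)
    (hCobs : 0 ≤ Cobs) (hδ₀ : 0 ≤ δ₀) (hδ : 0 < δ) (hδ1 : δ < 1)
    (hobs : ∀ v : A, ‖ι v‖ ≤ Cobs * (‖L v‖ + δ₀))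
    (g gs : H) (us uγ : A) (hus : L us = gs) (hg : ‖gs - g‖ ≤ δ)
    (hmin : ∀ u : A,
      ‖L uγ - g‖ ^ 2 + δ ^ 2 * ‖uγ‖ ^ 2 ≤ ‖L u - g‖ ^ 2 + δ ^ 2 * ‖u‖ ^ 2) :
    ‖ι (uγ - us)‖ ≤ Cobs * (δ₀ + δ * Real.sqrt (1 + ‖us‖ ^ 2)) ∧
    Cobs * (δ₀ + δ * Real.sqrt (1 + ‖us‖ ^ 2)) ≤ Cobs * (δ₀ + (1 + ‖us‖) * δ) := by
  set v : A := us - uγ with hv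
  set Q : ℝ := ‖L v‖ ^ 2 + δ ^ 2 * ‖v‖ ^ 2 with hQ
  set B : ℝ := inner ℝ (L uγ - g) (L v) + δ ^ 2 * inner ℝ uγ v with hB
  have hQ0 : 0 ≤ Q := by positivity
  -- expansion of the functional along the line uγ + t v
  have hexp : ∀ t : ℝ, ‖L (uγ + t • v) - g‖ ^ 2 + δ ^ 2 * ‖uγ + t • v‖ ^ 2
      = (‖L uγ - g‖ ^ 2 + δ ^ 2 * ‖uγ‖ ^ 2) + 2 * t * B + t ^ 2 * Q := by
    intro t
    have h1 : L (uγ + t • v) - g = (L uγ - g) + t • (L v) := by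
      rw [map_add, map_smul]; module
    have e1 : ‖(L uγ - g) + t • (L v)‖ ^ 2
        = ‖L uγ - g‖ ^ 2 + 2 * (t * inner ℝ (L uγ - g) (L v)) + t ^ 2 * ‖L v‖ ^ 2 := by
      rw [norm_add_sq_real, real_inner_smul_right, norm_smul]
      simp [mul_pow, sq_abs]
    have e2 : ‖uγ + t • v‖ ^ 2
        = ‖uγ‖ ^ 2 + 2 * (t * inner ℝ uγ v) + t ^ 2 * ‖v‖ ^ 2 := by
      rw [norm_add_sq_real, real_inner_smul_right, norm_smul]
      simp [mul_pow, sq_abs]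
    rw [h1, e1, e2, hB, hQ]; ring
  have hline : ∀ t : ℝ, 0 ≤ 2 * t * B + t ^ 2 * Q := by
    intro t
    have := hmin (uγ + t • v)
    rw [hexp t] at this
    linarith
  -- linear term vanishes
  have hB0 : B = 0 := by
    rcases eq_or_lt_of_le hQ0 with hQz | hQp
    · -- Q = 0 forces v = 0 (since δ > 0), hence B = 0
      have hv0 : v = 0 := by
        have h2 : δ ^ 2 * ‖v‖ ^ 2 = 0 := by nlinarith [sq_nonneg ‖L v‖, sq_nonneg ‖v‖]
        have h3 : ‖v‖ ^ 2 = 0 := (mul_eq_zero.mp h2).resolve_left (by positivity)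
        have : ‖v‖ = 0 := by
          have := pow_eq_zero_iff (n := 2) (by norm_num) |>.mp h3
          exact this
        simpa using this
      simp [hB, hv0]
    · have h := hline (-B / Q)
      have : -(B ^ 2) / Q ≥ 0 := by
        have : 2 * (-B / Q) * B + (-B / Q) ^ 2 * Q = -(B ^ 2) / Q := by
          field_simp; ring
        linarith [this ▸ h]
      have hB2 : B ^ 2 ≤ 0 := by
        have := div_nonneg_iff.mp this
        rcases this with ⟨h1, _⟩ | ⟨h1, h2⟩
        · linarith
        · linarith
      nlinarith [sq_nonneg B]
  -- bound on Q from optimality at t = 1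
  have hJus : ‖L us - g‖ ^ 2 + δ ^ 2 * ‖us‖ ^ 2 ≤ δ ^ 2 * (1 + ‖us‖ ^ 2) := by
    rw [hus]
    nlinarith [norm_nonneg (gs - g), hg, hδ.le]
  have hQle : Q ≤ δ ^ 2 * (1 + ‖us‖ ^ 2) := by
    have h1 := hexp 1
    have h2 : uγ + (1:ℝ) • v = us := by rw [hv]; module
    rw [h2] at h1
    have hJγ : 0 ≤ ‖L uγ - g‖ ^ 2 + δ ^ 2 * ‖uγ‖ ^ 2 := by positivity
    rw [hB0] at h1
    linarith
  have hLv : ‖L v‖ ≤ δ * Real.sqrt (1 + ‖us‖ ^ 2) := by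
    have h1 : ‖L v‖ ^ 2 ≤ δ ^ 2 * (1 + ‖us‖ ^ 2) := by
      have : 0 ≤ δ ^ 2 * ‖v‖ ^ 2 := by positivity
      linarith
    calc ‖L v‖ = Real.sqrt (‖L v‖ ^ 2) := (Real.sqrt_sq (norm_nonneg _)).symm
      _ ≤ Real.sqrt (δ ^ 2 * (1 + ‖us‖ ^ 2)) := Real.sqrt_le_sqrt h1
      _ = δ * Real.sqrt (1 + ‖us‖ ^ 2) := by
          rw [Real.sqrt_mul (by positivity), Real.sqrt_sq hδ.le]
  constructor
  · have h1 : ‖ι (uγ - us)‖ = ‖ι v‖ := by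
      have : ι (uγ - us) = -ι v := by rw [hv, map_sub, map_sub]; abel
      rw [this, norm_neg]
    rw [h1]
    calc ‖ι v‖ ≤ Cobs * (‖L v‖ + δ₀) := hobs v
      _ ≤ Cobs * (δ₀ + δ * Real.sqrt (1 + ‖us‖ ^ 2)) := by
          apply mul_le_mul_of_nonneg_left _ hCobs
          linarith
  · apply mul_le_mul_of_nonneg_left _ hCobs
    have hs : Real.sqrt (1 + ‖us‖ ^ 2) ≤ 1 + ‖us‖ := by
      rw [show (1:ℝ) + ‖us‖ = Real.sqrt ((1 + ‖us‖) ^ 2) by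
        rw [Real.sqrt_sq (by positivity)]]
      apply Real.sqrt_le_sqrt
      nlinarith [norm_nonneg us]
    have := mul_le_mul_of_nonneg_left hs hδ.le
    linarith
end

section
/- Let ξ ∈ C¹(ℝⁿ, ℝⁿ) be a vector field, (b^{ij}) symmetric C¹ coefficients, and z ∈ C²((0,T)×ℝⁿ). Then the following pointwise multiplier identity holds: ∑_{i=1}^n ∂_{x_i} [ 2(ξ·∇z) ∑_j b^{ij} z_j + ξ^i ( z_t² − ∑_{j,k} b^{jk} z_j z_k ) ] = 2(ξ·∇z)( ∑_{i,j} (b^{ij} z_i)_j − z_{tt} ) + 2 ∂_t ( z_t ξ·∇z ) + 2 ∑_{i,j,k} b^{ij} z_i z_k ξ^k_j + (div ξ) z_t² − ∑_{i,j} z_j z_i div(b^{ij} ξ). -/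
/-- time derivative of a function on `ℝ × ℝⁿ` -/
noncomputable def pt {n : ℕ} (f : ℝ × (Fin n → ℝ) → ℝ) (p : ℝ × (Fin n → ℝ)) : ℝ :=
  fderiv ℝ f p (1, 0)

/-- `i`-th spatial partial derivative of a function on `ℝ × ℝⁿ` -/
noncomputable def px {n : ℕ} (i : Fin n) (f : ℝ × (Fin n → ℝ) → ℝ)
    (p : ℝ × (Fin n → ℝ)) : ℝ :=
  fderiv ℝ f p (0, Pi.single i 1)

/-- `i`-th partial derivative of a function on `ℝⁿ` -/
noncomputable def pxs {n : ℕ} (i : Fin n) (g : (Fin n → ℝ) → ℝ) (x : Fin n → ℝ) : ℝ :=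
  fderiv ℝ g x (Pi.single i 1)

section rules
variable {E : Type*} [NormedAddCommGroup E] [NormedSpace ℝ E] {f g : E → ℝ} {x : E}

lemma fd_mul (hf : DifferentiableAt ℝ f x) (hg : DifferentiableAt ℝ g x) (v : E) :
    fderiv ℝ (fun y => f y * g y) x v = fderiv ℝ f x v * g x + f x * fderiv ℝ g x v := by
  rw [fderiv_fun_mul hf hg]; simp; ring

lemma fd_add (hf : DifferentiableAt ℝ f x) (hg : DifferentiableAt ℝ g x) (v : E) :
    fderiv ℝ (fun y => f y + g y) x v = fderiv ℝ f x v + fderiv ℝ g x v := by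
  rw [fderiv_fun_add hf hg]; simp

lemma fd_sub (hf : DifferentiableAt ℝ f x) (hg : DifferentiableAt ℝ g x) (v : E) :
    fderiv ℝ (fun y => f y - g y) x v = fderiv ℝ f x v - fderiv ℝ g x v := by
  rw [fderiv_fun_sub hf hg]; simp

lemma fd_sum {ι : Type*} {s : Finset ι} {A : ι → E → ℝ}
    (h : ∀ i ∈ s, DifferentiableAt ℝ (A i) x) (v : E) :
    fderiv ℝ (fun y => ∑ i ∈ s, A i y) x v = ∑ i ∈ s, fderiv ℝ (A i) x v := by
  rw [fderiv_fun_sum h]; simp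

lemma fd_pow2 (hf : DifferentiableAt ℝ f x) (v : E) :
    fderiv ℝ (fun y => f y ^ 2) x v = 2 * f x * fderiv ℝ f x v := by
  have h : (fun y => f y ^ 2) = fun y => f y * f y := by ext y; ring
  rw [h, fd_mul hf hf]; ring

lemma fd_const {c : ℝ} (v : E) : fderiv ℝ (fun _ => c) x v = 0 := by
  rw [fderiv_fun_const]; simp

lemma fd_const_mul (c : ℝ) (hf : DifferentiableAt ℝ f x) (v : E) :
    fderiv ℝ (fun y => c * f y) x v = c * fderiv ℝ f x v := by
  rw [fderiv_const_mul hf]; simp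

end rules

section ptpx
variable {n : ℕ} {p : ℝ × (Fin n → ℝ)}

lemma fd_snd {g : (Fin n → ℝ) → ℝ} (hg : DifferentiableAt ℝ g p.2) (v : ℝ × (Fin n → ℝ)) :
    fderiv ℝ (fun q : ℝ × (Fin n → ℝ) => g q.2) p v = fderiv ℝ g p.2 v.2 := by
  have h : HasFDerivAt (fun q : ℝ × (Fin n → ℝ) => g q.2)
      ((fderiv ℝ g p.2).comp (ContinuousLinearMap.snd ℝ ℝ (Fin n → ℝ))) p :=
    hg.hasFDerivAt.comp p hasFDerivAt_snd
  rw [h.fderiv]; rfl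

lemma fd_fd {z : ℝ × (Fin n → ℝ) → ℝ} (hz : ContDiff ℝ 2 z) (v w : ℝ × (Fin n → ℝ)) :
    fderiv ℝ (fun q => fderiv ℝ z q w) p v = fderiv ℝ (fderiv ℝ z) p v w := by
  rw [fderiv_clm_apply ((hz.fderiv_right (m := 1) (by norm_num)).differentiable one_ne_zero p)
    (differentiableAt_const w)]
  simp

lemma fd_symm {z : ℝ × (Fin n → ℝ) → ℝ} (hz : ContDiff ℝ 2 z) (v w : ℝ × (Fin n → ℝ)) :
    fderiv ℝ (fun q => fderiv ℝ z q w) p v = fderiv ℝ (fun q => fderiv ℝ z q v) p w := by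
  rw [fd_fd hz, fd_fd hz]
  exact (hz.contDiffAt.isSymmSndFDerivAt (by norm_num)) v w

lemma px_pt {z : ℝ × (Fin n → ℝ) → ℝ} (hz : ContDiff ℝ 2 z) (i : Fin n) :
    px i (pt z) p = pt (px i z) p := by
  unfold px pt; exact fd_symm hz _ _

lemma px_px {z : ℝ × (Fin n → ℝ) → ℝ} (hz : ContDiff ℝ 2 z) (i j : Fin n) :
    px i (px j z) p = px j (px i z) p := by
  unfold px; exact fd_symm hz _ _

end ptpx

lemma sum3_rot {n : ℕ} (f : Fin n → Fin n → Fin n → ℝ) :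
    ∑ a, ∑ b, ∑ c, f a b c = ∑ a, ∑ b, ∑ c, f c a b := by
  rw [Finset.sum_comm]
  exact Finset.sum_congr rfl fun x _ => Finset.sum_comm

lemma alg {n : ℕ} (B : Fin n → Fin n → ℝ) (Bd : Fin n → Fin n → Fin n → ℝ)
    (X : Fin n → ℝ) (Xd : Fin n → Fin n → ℝ) (Z Zt : Fin n → ℝ)
    (ZZ : Fin n → Fin n → ℝ) (U Utt : ℝ)
    (hB : ∀ i j, B i j = B j i) (hBd : ∀ i j k, Bd i j k = Bd j i k)
    (hZZ : ∀ i j, ZZ i j = ZZ j i) :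
    ∑ i, (2 * (∑ m, (Xd m i * Z m + X m * ZZ i m)) * (∑ j, B i j * Z j)
      + 2 * (∑ m, X m * Z m) * (∑ j, (Bd i j i * Z j + B i j * ZZ i j))
      + Xd i i * (U ^ 2 - ∑ j, ∑ k, B j k * Z j * Z k)
      + X i * (2 * U * Zt i - ∑ j, ∑ k, (Bd j k i * Z j * Z k
          + B j k * ZZ i j * Z k + B j k * Z j * ZZ i k)))
    = 2 * (∑ m, X m * Z m) * ((∑ i, ∑ j, (Bd i j j * Z i + B i j * ZZ j i)) - Utt)
      + 2 * (Utt * (∑ m, X m * Z m) + U * ∑ m, X m * Zt m)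
      + 2 * ∑ i, ∑ j, ∑ k, B i j * Z i * Z k * Xd k j
      + (∑ k, Xd k k) * U ^ 2
      - ∑ i, ∑ j, Z j * Z i * (∑ k, (Bd i j k * X k + B i j * Xd k k)) := by
  simp only [mul_sub, mul_add, add_mul, sub_mul, Finset.mul_sum, Finset.sum_mul,
    Finset.sum_add_distrib, Finset.sum_sub_distrib]
  have q1 : ∑ a, ∑ b, ∑ c, 2 * (Xd c a * Z c) * (B a b * Z b)
      = ∑ a, ∑ b, ∑ c, 2 * (B a b * Z a * Z c * Xd c b) := by
    conv_rhs => rw [Finset.sum_comm]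
    refine Finset.sum_congr rfl fun a _ => Finset.sum_congr rfl fun b _ =>
      Finset.sum_congr rfl fun c _ => ?_
    rw [hB b a]; ring
  have f1 : (∑ a, ∑ b, ∑ c, X a * (B b c * Z b * ZZ a c))
      = ∑ a, ∑ b, ∑ c, X a * (B b c * ZZ a b * Z c) := by
    refine Finset.sum_congr rfl fun a _ => ?_
    rw [Finset.sum_comm]
    exact Finset.sum_congr rfl fun b _ => Finset.sum_congr rfl fun c _ => by rw [hB c b]; ring
  have q2 : ∑ a, ∑ b, ∑ c, 2 * (X c * ZZ a c) * (B a b * Z b)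
      = (∑ a, ∑ b, ∑ c, X a * (B b c * ZZ a b * Z c))
        + ∑ a, ∑ b, ∑ c, X a * (B b c * Z b * ZZ a c) := by
    rw [f1, ← two_mul]
    calc ∑ a, ∑ b, ∑ c, 2 * (X c * ZZ a c) * (B a b * Z b)
        = ∑ a, ∑ b, ∑ c, 2 * (X c * (B a b * ZZ c a * Z b)) := by
          refine Finset.sum_congr rfl fun a _ => Finset.sum_congr rfl fun b _ =>
            Finset.sum_congr rfl fun c _ => ?_
          rw [hZZ a c]; ring
      _ = ∑ a, ∑ b, ∑ c, 2 * (X a * (B b c * ZZ a b * Z c)) := (sum3_rot _).symm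
      _ = 2 * ∑ a, ∑ b, ∑ c, X a * (B b c * ZZ a b * Z c) := by
          simp only [Finset.mul_sum]
  have q3 : ∑ a, ∑ b, ∑ c, 2 * (X c * Z c) * (Bd a b a * Z b)
      = ∑ a, ∑ b, ∑ c, 2 * (X c * Z c) * (Bd a b b * Z a) := by
    conv_rhs => rw [Finset.sum_comm]
    refine Finset.sum_congr rfl fun a _ => Finset.sum_congr rfl fun b _ =>
      Finset.sum_congr rfl fun c _ => ?_
    rw [hBd b a a]
  have q4 : ∑ a, ∑ b, ∑ c, 2 * (X c * Z c) * (B a b * ZZ a b)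
      = ∑ a, ∑ b, ∑ c, 2 * (X c * Z c) * (B a b * ZZ b a) := by
    refine Finset.sum_congr rfl fun a _ => Finset.sum_congr rfl fun b _ =>
      Finset.sum_congr rfl fun c _ => ?_
    rw [hZZ a b]
  have q5 : ∑ a, ∑ b, ∑ c, Xd a a * (B b c * Z b * Z c)
      = ∑ a, ∑ b, ∑ c, Z b * Z a * (B a b * Xd c c) :=
    calc ∑ a, ∑ b, ∑ c, Xd a a * (B b c * Z b * Z c)
        = ∑ a, ∑ b, ∑ c, Xd c c * (B a b * Z a * Z b) := sum3_rot _
      _ = ∑ a, ∑ b, ∑ c, Z b * Z a * (B a b * Xd c c) := by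
          exact Finset.sum_congr rfl fun a _ => Finset.sum_congr rfl fun b _ =>
            Finset.sum_congr rfl fun c _ => by ring
  have q6 : ∑ a, ∑ b, ∑ c, X a * (Bd b c a * Z b * Z c)
      = ∑ a, ∑ b, ∑ c, Z b * Z a * (Bd a b c * X c) :=
    calc ∑ a, ∑ b, ∑ c, X a * (Bd b c a * Z b * Z c)
        = ∑ a, ∑ b, ∑ c, X c * (Bd a b c * Z a * Z b) := sum3_rot _
      _ = ∑ a, ∑ b, ∑ c, Z b * Z a * (Bd a b c * X c) := by
          exact Finset.sum_congr rfl fun a _ => Finset.sum_congr rfl fun b _ =>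
            Finset.sum_congr rfl fun c _ => by ring
  have q7 : ∑ c : Fin n, 2 * (X c * Z c) * Utt = ∑ c : Fin n, 2 * (Utt * (X c * Z c)) :=
    Finset.sum_congr rfl fun c _ => by ring
  have q8 : ∑ a : Fin n, X a * (2 * U * Zt a) = ∑ a : Fin n, 2 * (U * (X a * Zt a)) :=
    Finset.sum_congr rfl fun a _ => by ring
  linear_combination q1 + q2 + q3 + q4 - q5 - q6 + q7 + q8

/-- the pointwise multiplier identity for the hidden regularity estimate. -/
theorem stmt13 {n : ℕ} (b : Fin n → Fin n → (Fin n → ℝ) → ℝ)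
    (ξ : (Fin n → ℝ) → Fin n → ℝ) (z : ℝ × (Fin n → ℝ) → ℝ)
    (hb : ∀ i j, ContDiff ℝ 1 (b i j)) (hbsymm : ∀ i j x, b i j x = b j i x)
    (hξ : ContDiff ℝ 1 ξ) (hz : ContDiff ℝ 2 z)
    (p : ℝ × (Fin n → ℝ)) :
    ∑ i, px i (fun q =>
        2 * (∑ m, ξ q.2 m * px m z q) * (∑ j, b i j q.2 * px j z q)
          + ξ q.2 i * ((pt z q) ^ 2 - ∑ j, ∑ k, b j k q.2 * px j z q * px k z q)) p
      = 2 * (∑ m, ξ p.2 m * px m z p)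
            * ((∑ i, ∑ j, px j (fun q => b i j q.2 * px i z q) p) - pt (pt z) p)
        + 2 * pt (fun q => pt z q * ∑ m, ξ q.2 m * px m z q) p
        + 2 * ∑ i, ∑ j, ∑ k, b i j p.2 * px i z p * px k z p * pxs j (fun y => ξ y k) p.2
        + (∑ k, pxs k (fun y => ξ y k) p.2) * (pt z p) ^ 2
        - ∑ i, ∑ j, px j z p * px i z p * (∑ k, pxs k (fun y => b i j y * ξ y k) p.2) := by
  have hdz : ∀ v : ℝ × (Fin n → ℝ), Differentiable ℝ (fun q => fderiv ℝ z q v) := fun v =>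
    ((hz.fderiv_right (m := 1) (by norm_num)).clm_apply contDiff_const).differentiable one_ne_zero
  have hxik : ∀ k, Differentiable ℝ (fun y => ξ y k) := fun k =>
    ((contDiff_pi.1 hξ k).differentiable one_ne_zero)
  have hbij : ∀ i j, Differentiable ℝ (b i j) := fun i j =>
    ((hb i j).differentiable one_ne_zero)
  have hXfd : ∀ (m : Fin n) (v : ℝ × (Fin n → ℝ)),
      fderiv ℝ (fun q : ℝ × (Fin n → ℝ) => ξ q.2 m) p v = fderiv ℝ (fun y => ξ y m) p.2 v.2 :=
    fun m v => fd_snd (hxik m p.2) v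
  have hL : ∀ i, px i (fun q =>
        2 * (∑ m, ξ q.2 m * px m z q) * (∑ j, b i j q.2 * px j z q)
          + ξ q.2 i * ((pt z q) ^ 2 - ∑ j, ∑ k, b j k q.2 * px j z q * px k z q)) p
      = 2 * (∑ m, (pxs i (fun y => ξ y m) p.2 * px m z p + ξ p.2 m * px i (px m z) p))
          * (∑ j, b i j p.2 * px j z p)
        + 2 * (∑ m, ξ p.2 m * px m z p)
          * (∑ j, (pxs i (b i j) p.2 * px j z p + b i j p.2 * px i (px j z) p))
        + pxs i (fun y => ξ y i) p.2
            * ((pt z p) ^ 2 - ∑ j, ∑ k, b j k p.2 * px j z p * px k z p)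
        + ξ p.2 i * (2 * pt z p * px i (pt z) p
            - ∑ j, ∑ k, (pxs i (b j k) p.2 * px j z p * px k z p
                + b j k p.2 * px i (px j z) p * px k z p
                + b j k p.2 * px j z p * px i (px k z) p)) := by
    intro i
    unfold px pt pxs
    simp (disch := fun_prop) only [fd_mul, fd_add, fd_sub, fd_sum, fd_pow2, fd_const_mul, fd_snd, hXfd, fd_const, add_mul]
    ring1
  have hR1 : ∀ i j : Fin n, px j (fun q => b i j q.2 * px i z q) p
      = pxs j (b i j) p.2 * px i z p + b i j p.2 * px j (px i z) p := by
    intro i j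
    unfold px pxs
    simp (disch := fun_prop) only [fd_mul, fd_snd]
  have hR2 : pt (fun q => pt z q * ∑ m, ξ q.2 m * px m z q) p
      = pt (pt z) p * (∑ m, ξ p.2 m * px m z p)
        + pt z p * ∑ m, ξ p.2 m * pt (px m z) p := by
    unfold px pt
    simp (disch := fun_prop) only [fd_mul, fd_sum, hXfd, fd_const, map_zero, zero_mul, zero_add]
  have hR5 : ∀ i j k : Fin n, pxs k (fun y => b i j y * ξ y k) p.2
      = pxs k (b i j) p.2 * ξ p.2 k + b i j p.2 * pxs k (fun y => ξ y k) p.2 := by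
    intro i j k
    unfold pxs
    simp (disch := fun_prop) only [fd_mul]
  have hBd' : ∀ i j k : Fin n, pxs k (b i j) p.2 = pxs k (b j i) p.2 := fun i j k => by
    rw [show b i j = b j i from funext fun y => hbsymm i j y]
  simp only [hL, hR1, hR2, hR5, px_pt hz]
  exact alg (fun i j => b i j p.2) (fun i j k => pxs k (b i j) p.2) (fun m => ξ p.2 m)
    (fun k j => pxs j (fun y => ξ y k) p.2) (fun i => px i z p) (fun i => pt (px i z) p)
    (fun i j => px i (px j z) p) (pt z p) (pt (pt z) p)
    (fun i j => hbsymm i j p.2)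
    hBd'
    (fun i j => px_px hz i j)
end
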